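/- Let X be a nonempty finite type, p, p̂ : X → ℝ two probability vectors, r, V*, V̂ : X → ℝ, γ ∈ [0,1), Q̂, Q* ∈ ℝ, and ε, ε̄, Φ ≥ 0 with ε ≤ ε̄. Assume |Q̂ − Q*| ≤ ε, |V̂(x) − V*(x)| ≤ ε for all x ∈ X, |Σ_{x'} (p(x') − p̂(x'))·(r(x') + γ·V*(x'))| ≥ Φ, and the information advantage condition Φ > 2·(1 + γ)·ε̄. Then the secure-case deviation limit satisfies |Q̂ − Q* + γ·Σ_{x'} p(x')·(V*(x') − V̂(x'))| ≤ (1 + γ)·ε̄, while the attack-case deviation limit satisfies |Q̂ − Q* + γ·Σ_{x'} p̂(x')·(V*(x') − V̂(x')) + Σ_{x'} (p(x') − p̂(x'))·(r(x') + γ·V*(x'))| > (1 + γ)·ε̄; in particular the two limits are strictly separated by the threshold (1 + γ)·ε̄. -/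
import Mathlib

open Finset

/-- **Theorem 5 (sufficiency):** under the information advantage condition
`Φ > 2·(1+γ)·ε̄`, the secure-case deviation limit lies at or below the threshold
`(1+γ)·ε̄`, while the attack-case deviation limit lies strictly above it. -/
theorem information_advantage_separation
    {X : Type*} [Fintype X] [Nonempty X]
    (p phat : X → ℝ)
    (hp0 : ∀ x, 0 ≤ p x) (hp1 : ∑ x, p x = 1)
    (hphat0 : ∀ x, 0 ≤ phat x) (hphat1 : ∑ x, phat x = 1)
    (r Vstar Vhat : X → ℝ) (γ : ℝ) (hγ0 : 0 ≤ γ) (hγ1 : γ < 1)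
    (Qhat Qstar : ℝ) (ε εbar Φ : ℝ)
    (hε : 0 ≤ ε) (hεbar : 0 ≤ εbar) (hΦ : 0 ≤ Φ) (hεle : ε ≤ εbar)
    (hQ : |Qhat - Qstar| ≤ ε)
    (hV : ∀ x, |Vhat x - Vstar x| ≤ ε)
    (hdrift : |∑ x, (p x - phat x) * (r x + γ * Vstar x)| ≥ Φ)
    (hInfoAdv : Φ > 2 * (1 + γ) * εbar) :
    |Qhat - Qstar + γ * ∑ x, p x * (Vstar x - Vhat x)| ≤ (1 + γ) * εbar ∧
    |Qhat - Qstar + γ * ∑ x, phat x * (Vstar x - Vhat x)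
        + ∑ x, (p x - phat x) * (r x + γ * Vstar x)| > (1 + γ) * εbar := by
  have key : ∀ (q : X → ℝ), (∀ x, 0 ≤ q x) → (∑ x, q x = 1) →
      |Qhat - Qstar + γ * ∑ x, q x * (Vstar x - Vhat x)| ≤ (1 + γ) * εbar := by
    intro q hq0 hq1
    have hsum : |∑ x, q x * (Vstar x - Vhat x)| ≤ ε := by
      calc |∑ x, q x * (Vstar x - Vhat x)| ≤ ∑ x, |q x * (Vstar x - Vhat x)| :=
            Finset.abs_sum_le_sum_abs _ _
        _ ≤ ∑ x, q x * ε := by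
            apply Finset.sum_le_sum
            intro x _
            rw [abs_mul, abs_of_nonneg (hq0 x)]
            have := hV x
            rw [abs_sub_comm] at this
            exact mul_le_mul_of_nonneg_left this (hq0 x)
        _ = ε := by rw [← Finset.sum_mul, hq1, one_mul]
    calc |Qhat - Qstar + γ * ∑ x, q x * (Vstar x - Vhat x)|
        ≤ |Qhat - Qstar| + |γ * ∑ x, q x * (Vstar x - Vhat x)| := abs_add_le _ _
      _ ≤ ε + γ * ε := by
          rw [abs_mul, abs_of_nonneg hγ0]
          exact add_le_add hQ (mul_le_mul_of_nonneg_left hsum hγ0)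
      _ = (1 + γ) * ε := by ring
      _ ≤ (1 + γ) * εbar := by nlinarith
  refine ⟨key p hp0 hp1, ?_⟩
  have h1 := key phat hphat0 hphat1
  have h2 : |Qhat - Qstar + γ * ∑ x, phat x * (Vstar x - Vhat x)
        + ∑ x, (p x - phat x) * (r x + γ * Vstar x)| ≥
      |∑ x, (p x - phat x) * (r x + γ * Vstar x)|
        - |Qhat - Qstar + γ * ∑ x, phat x * (Vstar x - Vhat x)| := by
    have := abs_sub_abs_le_abs_sub (∑ x, (p x - phat x) * (r x + γ * Vstar x))
      (-(Qhat - Qstar + γ * ∑ x, phat x * (Vstar x - Vhat x)))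
    simp only [abs_neg, sub_neg_eq_add] at this
    rw [add_comm (∑ x, (p x - phat x) * (r x + γ * Vstar x))] at this
    linarith [this, abs_add_le (Qhat - Qstar + γ * ∑ x, phat x * (Vstar x - Vhat x))
      (∑ x, (p x - phat x) * (r x + γ * Vstar x))]
  linarith
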